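/- Let n₁, n₂ > 0 be real numbers and let γ₁, γ₂ > 0. If for every δ with -γ₂ < δ < γ₁ one has 1/(γ₁·√n₁) + 1/(γ₂·√n₂) ≤ 1/((γ₁ - δ)·√n₁) + 1/((γ₂ + δ)·√n₂), then there exists a constant C > 0 such that γ₁ = C·n₁^{-1/4} and γ₂ = C·n₂^{-1/4}. -/

import Mathlib

open Real

/-- If shifting the decision boundary cannot improve the objective, i.e. for every δ with
-γ₂ < δ < γ₁ one has 1/(γ₁·√n₁) + 1/(γ₂·√n₂) ≤ 1/((γ₁-δ)·√n₁) + 1/((γ₂+δ)·√n₂),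
then γ₁ = C·n₁^{-1/4} and γ₂ = C·n₂^{-1/4} for some constant C > 0. -/
theorem stationary_margins_are_inv_fourth_root
    (n₁ n₂ : ℝ) (hn₁ : 0 < n₁) (hn₂ : 0 < n₂)
    (γ₁ γ₂ : ℝ) (hγ₁ : 0 < γ₁) (hγ₂ : 0 < γ₂)
    (hopt : ∀ δ : ℝ, -γ₂ < δ → δ < γ₁ →
      1 / (γ₁ * Real.sqrt n₁) + 1 / (γ₂ * Real.sqrt n₂) ≤
        1 / ((γ₁ - δ) * Real.sqrt n₁) + 1 / ((γ₂ + δ) * Real.sqrt n₂)) :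
    ∃ C : ℝ, 0 < C ∧ γ₁ = C * n₁ ^ (-(1 : ℝ) / 4) ∧ γ₂ = C * n₂ ^ (-(1 : ℝ) / 4) := by
  have ha : 0 < Real.sqrt n₁ := Real.sqrt_pos.mpr hn₁
  have hb : 0 < Real.sqrt n₂ := Real.sqrt_pos.mpr hn₂
  set a := Real.sqrt n₁
  set b := Real.sqrt n₂
  set f : ℝ → ℝ := fun δ => 1 / ((γ₁ - δ) * a) + 1 / ((γ₂ + δ) * b) with hf
  have hderiv : HasDerivAt f (1 / (γ₁ ^ 2 * a) - 1 / (γ₂ ^ 2 * b)) 0 := by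
    have h1 : HasDerivAt (fun δ : ℝ => (γ₁ - δ) * a) (-a) 0 := by
      simpa using ((hasDerivAt_const 0 γ₁).sub (hasDerivAt_id 0)).mul_const a
    have h2 : HasDerivAt (fun δ : ℝ => (γ₂ + δ) * b) b 0 := by
      simpa using ((hasDerivAt_const 0 γ₂).add (hasDerivAt_id 0)).mul_const b
    have hne1 : (γ₁ - 0) * a ≠ 0 := by
      have : 0 < (γ₁ - 0) * a := by simpa using mul_pos hγ₁ ha
      exact ne_of_gt this
    have hne2 : (γ₂ + 0) * b ≠ 0 := by
      have : 0 < (γ₂ + 0) * b := by simpa using mul_pos hγ₂ hb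
      exact ne_of_gt this
    have h1' := h1.inv hne1
    have h2' := h2.inv hne2
    have := h1'.add h2'
    have heq : -(-a) / ((γ₁ - 0) * a) ^ 2 + -b / ((γ₂ + 0) * b) ^ 2
        = 1 / (γ₁ ^ 2 * a) - 1 / (γ₂ ^ 2 * b) := by
      field_simp [hγ₁.ne', hγ₂.ne']
      ring
    rw [heq] at this
    simpa [f, one_div, Pi.add_def, Pi.inv_def] using this
  have hmin : IsLocalMin f 0 := by
    have hmem : Set.Ioo (-γ₂) γ₁ ∈ nhds (0 : ℝ) :=
      Ioo_mem_nhds (by linarith) hγ₁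
    filter_upwards [hmem] with δ hδ
    simpa [f] using hopt δ hδ.1 hδ.2
  have hzero : 1 / (γ₁ ^ 2 * a) - 1 / (γ₂ ^ 2 * b) = 0 :=
    hmin.hasDerivAt_eq_zero hderiv
  have hkey : γ₁ ^ 2 * a = γ₂ ^ 2 * b := by
    have h1 : (0:ℝ) < γ₁ ^ 2 * a := by positivity
    have h2 : (0:ℝ) < γ₂ ^ 2 * b := by positivity
    field_simp at hzero
    linarith
  refine ⟨γ₁ * n₁ ^ ((1:ℝ)/4), by positivity, ?_, ?_⟩
  · rw [mul_assoc, ← Real.rpow_add hn₁]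
    norm_num
  · have hsq : (γ₂ * n₂ ^ ((1:ℝ)/4)) ^ 2 = (γ₁ * n₁ ^ ((1:ℝ)/4)) ^ 2 := by
      have e1 : (n₁ ^ ((1:ℝ)/4)) ^ 2 = a := by
        rw [← Real.rpow_natCast (n₁ ^ ((1:ℝ)/4)) 2, ← Real.rpow_mul hn₁.le]
        norm_num
        exact (Real.sqrt_eq_rpow _).symm
      have e2 : (n₂ ^ ((1:ℝ)/4)) ^ 2 = b := by
        rw [← Real.rpow_natCast (n₂ ^ ((1:ℝ)/4)) 2, ← Real.rpow_mul hn₂.le]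
        norm_num
        exact (Real.sqrt_eq_rpow _).symm
      rw [mul_pow, mul_pow, e1, e2]
      linarith
    have h1 : (0:ℝ) ≤ γ₂ * n₂ ^ ((1:ℝ)/4) := by positivity
    have h2 : (0:ℝ) ≤ γ₁ * n₁ ^ ((1:ℝ)/4) := by positivity
    have heq := congrArg Real.sqrt hsq
    rw [Real.sqrt_sq h1, Real.sqrt_sq h2] at heq
    rw [← heq, mul_assoc, ← Real.rpow_add hn₂]
    norm_num
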